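/- Every 3-way real tensor A of size n₁×n₂×n₃ admits a tensor-train rank-1 decomposition: setting r₀ = min(n₁, n₂·n₃) and r₁ = min(n₂, n₃), there exist nonnegative reals σ̃_{ij} (1 ≤ i ≤ r₀, 1 ≤ j ≤ r₁), an orthonormal family (u_i)_{i=1}^{r₀} in ℝ^{n₁}, and for each i orthonormal families (b_{ij})_{j=1}^{r₁} in ℝ^{n₂} and (c_{ij})_{j=1}^{r₁} in ℝ^{n₃}, such that A = ∑_{i=1}^{r₀} ∑_{j=1}^{r₁} σ̃_{ij} · (u_i ∘ b_{ij} ∘ c_{ij}). -/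

import Mathlib

open Finset Matrix in
lemma svd_exists_le (m n : ℕ) (hmn : m ≤ n) (M : Fin m → Fin n → ℝ) :
    ∃ (σ : Fin m → ℝ) (u : Fin m → Fin m → ℝ) (v : Fin m → Fin n → ℝ),
      (∀ i, 0 ≤ σ i) ∧
      (∀ i, ∑ x, (u i x) ^ 2 = 1) ∧
      (∀ i i', i ≠ i' → ∑ x, u i x * u i' x = 0) ∧
      (∀ i, ∑ y, (v i y) ^ 2 = 1) ∧
      (∀ i i', i ≠ i' → ∑ y, v i y * v i' y = 0) ∧
      (∀ x y, M x y = ∑ i, σ i * u i x * v i y) := by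
  rcases Nat.eq_zero_or_pos m with hm | hm
  · subst hm
    exact ⟨fun i => 0, fun i => 0, fun i => 0, fun i => i.elim0, fun i => i.elim0,
      fun i => i.elim0, fun i => i.elim0, fun i => i.elim0, fun x => x.elim0⟩
  have : Nonempty (Fin m) := ⟨⟨0, hm⟩⟩
  have hH : (Matrix.of M * (Matrix.of M)ᴴ).IsHermitian :=
    Matrix.isHermitian_mul_conjTranspose_self _
  set H : Matrix (Fin m) (Fin m) ℝ := Matrix.of M * (Matrix.of M)ᴴ with hHdef
  have hHent : ∀ x x' : Fin m, H x x' = ∑ y, M x y * M x' y := by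
    intro x x'
    simp [hHdef, Matrix.mul_apply, Matrix.conjTranspose_apply]
  set U := hH.eigenvectorBasis with hU
  set lam := hH.eigenvalues with hlam
  have hUortho : ∀ i j, ∑ x, (U i) x * (U j) x = if i = j then 1 else 0 := by
    intro i j
    have h := orthonormal_iff_ite.mp U.orthonormal i j
    simpa [PiLp.inner_apply, RCLike.inner_apply, conj_trivial, mul_comm] using h
  have key1 : ∀ x x' : Fin m, ∑ i, (U i) x * (U i) x' = if x = x' then 1 else 0 := by
    intro x x'
    have hVU : (hH.eigenvectorUnitary : Matrix (Fin m) (Fin m) ℝ) *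
        star (hH.eigenvectorUnitary : Matrix (Fin m) (Fin m) ℝ) = 1 :=
      Matrix.mem_unitaryGroup_iff.mp hH.eigenvectorUnitary.2
    have h := congrFun (congrFun hVU x) x'
    simp only [Matrix.mul_apply, Matrix.star_apply, star_trivial,
      Matrix.IsHermitian.eigenvectorUnitary_apply, Matrix.one_apply] at h
    simp only [hU]
    exact h
  set w : Fin m → EuclideanSpace ℝ (Fin n) := fun i => WithLp.toLp 2 (fun y => ∑ x, M x y * (U i) x) with hwdef
  have heig : ∀ j x, ∑ x', H x x' * (U j) x' = lam j * (U j) x := by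
    intro j x
    have h4 := congrFun (hH.mulVec_eigenvectorBasis j) x
    simpa [Matrix.mulVec, dotProduct, hU, hlam] using h4
  have hw_inner : ∀ i j, ∑ y, w i y * w j y = lam j * (if i = j then 1 else 0) := by
    intro i j
    have h1 : ∑ y, w i y * w j y = ∑ x, (U i) x * ∑ x', H x x' * (U j) x' := by
      calc ∑ y, w i y * w j y
          = ∑ y, ∑ x, ∑ x', (M x y * (U i) x) * (M x' y * (U j) x') := by
            refine Finset.sum_congr rfl fun y _ => ?_
            simp only [hwdef, PiLp.toLp_apply]
            rw [Finset.sum_mul]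
            exact Finset.sum_congr rfl fun x _ => by rw [Finset.mul_sum]
        _ = ∑ x, ∑ y, ∑ x', (M x y * (U i) x) * (M x' y * (U j) x') := Finset.sum_comm
        _ = ∑ x, ∑ x', ∑ y, (M x y * (U i) x) * (M x' y * (U j) x') := by
            exact Finset.sum_congr rfl fun x _ => Finset.sum_comm
        _ = ∑ x, (U i) x * ∑ x', H x x' * (U j) x' := by
            refine Finset.sum_congr rfl fun x _ => ?_
            simp only [hHent, Finset.mul_sum, Finset.sum_mul]
            exact Finset.sum_congr rfl fun x' _ => Finset.sum_congr rfl fun y _ => by ring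
    rw [h1]
    calc ∑ x, (U i) x * ∑ x', H x x' * (U j) x'
        = ∑ x, (U i) x * (lam j * (U j) x) := by
          exact Finset.sum_congr rfl fun x _ => by rw [heig]
      _ = lam j * ∑ x, (U i) x * (U j) x := by
          rw [Finset.mul_sum]; exact Finset.sum_congr rfl fun x _ => by ring
      _ = lam j * (if i = j then 1 else 0) := by rw [hUortho]
  have hlam_nonneg : ∀ i, 0 ≤ lam i := by
    intro i
    have h := hw_inner i i
    rw [if_pos rfl, mul_one] at h
    rw [← h]
    exact Finset.sum_nonneg fun y _ => mul_self_nonneg _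
  set σ : Fin m → ℝ := fun i => Real.sqrt (lam i) with hσdef
  have hσsq : ∀ i, σ i ^ 2 = lam i := fun i => Real.sq_sqrt (hlam_nonneg i)
  have hσnn : ∀ i, 0 ≤ σ i := fun i => Real.sqrt_nonneg _
  have hwzero : ∀ i, lam i = 0 → w i = 0 := by
    intro i hi
    have h := hw_inner i i
    rw [if_pos rfl, mul_one, hi] at h
    ext y
    have := (Finset.sum_eq_zero_iff_of_nonneg
      (fun y _ => mul_self_nonneg (w i y))).mp h y (Finset.mem_univ y)
    simpa [mul_self_eq_zero] using this
  set S : Set (Fin m) := {i | lam i ≠ 0} with hSdef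
  have hembinj : Function.Injective (Fin.castLE hmn) := Fin.castLE_injective hmn
  set g : Fin n → Fin m := Function.invFun (Fin.castLE hmn) with hgdef
  have hg : ∀ i, g (Fin.castLE hmn i) = i := Function.leftInverse_invFun hembinj
  set v₀ : Fin m → EuclideanSpace ℝ (Fin n) := fun i => (σ i)⁻¹ • w i with hv₀def
  have hσne : ∀ i ∈ S, σ i ≠ 0 := by
    intro i hi
    simp only [hσdef]
    exact Real.sqrt_ne_zero'.mpr (lt_of_le_of_ne (hlam_nonneg i) (Ne.symm hi))
  have hv₀_inner : ∀ i j, i ∈ S → j ∈ S →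
      (inner ℝ (v₀ i) (v₀ j) : ℝ) = if i = j then 1 else 0 := by
    intro i j hi hj
    have h2 : (inner ℝ (v₀ i) (v₀ j) : ℝ) = (σ i)⁻¹ * (σ j)⁻¹ * ∑ y, w i y * w j y := by
      simp only [hv₀def, PiLp.inner_apply, RCLike.inner_apply, conj_trivial,
        PiLp.smul_apply, smul_eq_mul]
      rw [Finset.mul_sum]
      exact Finset.sum_congr rfl fun y _ => by ring
    rw [h2, hw_inner]
    rcases eq_or_ne i j with rfl | hij
    · simp only [if_pos rfl, mul_one]
      rw [← hσsq i, sq]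
      have h3 := hσne i hi
      field_simp
    · simp [hij]
  have hcard : Module.finrank ℝ (EuclideanSpace ℝ (Fin n)) = Fintype.card (Fin n) := by simp
  have hrestrict : Orthonormal ℝ
      ((Fin.castLE hmn '' S).restrict (fun k => v₀ (g k))) := by
    rw [orthonormal_iff_ite]
    rintro ⟨k, i, hi, rfl⟩ ⟨k', j, hj, rfl⟩
    show inner ℝ (v₀ (g (Fin.castLE hmn i))) (v₀ (g (Fin.castLE hmn j))) = _
    simp only [hg]
    rw [hv₀_inner i j hi hj]
    simp [Subtype.ext_iff, hembinj.eq_iff]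
  obtain ⟨B, hB⟩ := hrestrict.exists_orthonormalBasis_extension_of_card_eq hcard
  set v : Fin m → EuclideanSpace ℝ (Fin n) := fun i => B (Fin.castLE hmn i) with hvdef
  have hvortho : ∀ i j, ∑ y, (v i) y * (v j) y = if i = j then 1 else 0 := by
    intro i j
    have h := orthonormal_iff_ite.mp (B.orthonormal.comp (Fin.castLE hmn) hembinj) i j
    simpa [PiLp.inner_apply, RCLike.inner_apply, conj_trivial, Function.comp,
      hembinj.eq_iff, mul_comm] using h
  have hwv : ∀ i, w i = σ i • v i := by
    intro i
    rcases eq_or_ne (lam i) 0 with hi | hi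
    · have hσ0 : σ i = 0 := by simp [hσdef, hi]
      rw [hwzero i hi, hσ0, zero_smul]
    · have hBi : B (Fin.castLE hmn i) = v₀ (g (Fin.castLE hmn i)) :=
        hB (Fin.castLE hmn i) ⟨i, hi, rfl⟩
      rw [hvdef]
      simp only [hBi, hg, hv₀def]
      rw [smul_smul, mul_inv_cancel₀ (hσne i hi), one_smul]
  refine ⟨σ, fun i => (U i : Fin m → ℝ), fun i => (v i : Fin n → ℝ), hσnn, ?_, ?_, ?_, ?_, ?_⟩
  · intro i
    have h := hUortho i i
    simpa [sq] using h
  · intro i i' h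
    have h2 := hUortho i i'
    simpa [h] using h2
  · intro i
    have h := hvortho i i
    simpa [sq] using h
  · intro i i' h
    have h2 := hvortho i i'
    simpa [h] using h2
  · intro x y
    have step1 : ∑ i, (U i) x * w i y = M x y := by
      simp only [hwdef, PiLp.toLp_apply]
      calc ∑ i, (U i) x * ∑ x', M x' y * (U i) x'
          = ∑ i, ∑ x', M x' y * ((U i) x * (U i) x') := by
            refine Finset.sum_congr rfl fun i _ => ?_
            rw [Finset.mul_sum]
            exact Finset.sum_congr rfl fun x' _ => by ring
        _ = ∑ x', ∑ i, M x' y * ((U i) x * (U i) x') := Finset.sum_comm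
        _ = ∑ x', M x' y * (if x = x' then 1 else 0) := by
            refine Finset.sum_congr rfl fun x' _ => ?_
            rw [← Finset.mul_sum, key1]
        _ = M x y := by simp
    rw [← step1]
    refine Finset.sum_congr rfl fun i _ => ?_
    rw [hwv i]
    simp only [PiLp.smul_apply, smul_eq_mul]
    ring

open Finset in
lemma svd_exists_min (m n r : ℕ) (hr : r = min m n) (M : Fin m → Fin n → ℝ) :
    ∃ (σ : Fin r → ℝ) (u : Fin r → Fin m → ℝ) (v : Fin r → Fin n → ℝ),
      (∀ i, 0 ≤ σ i) ∧
      (∀ i, ∑ x, (u i x) ^ 2 = 1) ∧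
      (∀ i i', i ≠ i' → ∑ x, u i x * u i' x = 0) ∧
      (∀ i, ∑ y, (v i y) ^ 2 = 1) ∧
      (∀ i i', i ≠ i' → ∑ y, v i y * v i' y = 0) ∧
      (∀ x y, M x y = ∑ i, σ i * u i x * v i y) := by
  rcases le_total m n with hmn | hnm
  · have hrm : r = m := by omega
    subst hrm
    exact svd_exists_le r n hmn M
  · have hrn : r = n := by omega
    subst hrn
    obtain ⟨σ, v, u, h0, h1, h2, h3, h4, h5⟩ := svd_exists_le r m hnm (fun y x => M x y)
    exact ⟨σ, u, v, h0, h3, h4, h1, h2, fun x y =>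
      (h5 y x).trans (Finset.sum_congr rfl fun i _ => by ring)⟩

/-- Every 3-way real tensor admits a tensor-train rank-1 (TTr1) decomposition. -/
theorem ttr1_decomposition_three_way (n₁ n₂ n₃ : ℕ) (h₁ : 0 < n₁) (h₂ : 0 < n₂) (h₃ : 0 < n₃)
    (r₀ r₁ : ℕ) (hr₀ : r₀ = min n₁ (n₂ * n₃)) (hr₁ : r₁ = min n₂ n₃)
    (A : Fin n₁ × Fin n₂ × Fin n₃ → ℝ) :
    ∃ (σ : Fin r₀ → Fin r₁ → ℝ) (u : Fin r₀ → Fin n₁ → ℝ)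
      (b : Fin r₀ → Fin r₁ → Fin n₂ → ℝ) (c : Fin r₀ → Fin r₁ → Fin n₃ → ℝ),
      (∀ i j, 0 ≤ σ i j) ∧
      (∀ i, ∑ x : Fin n₁, (u i x) ^ 2 = 1) ∧
      (∀ i i' : Fin r₀, i ≠ i' → ∑ x : Fin n₁, u i x * u i' x = 0) ∧
      (∀ i j, ∑ y : Fin n₂, (b i j y) ^ 2 = 1) ∧
      (∀ (i : Fin r₀) (j j' : Fin r₁), j ≠ j' → ∑ y : Fin n₂, b i j y * b i j' y = 0) ∧
      (∀ i j, ∑ z : Fin n₃, (c i j z) ^ 2 = 1) ∧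
      (∀ (i : Fin r₀) (j j' : Fin r₁), j ≠ j' → ∑ z : Fin n₃, c i j z * c i j' z = 0) ∧
      (∀ (x : Fin n₁) (y : Fin n₂) (z : Fin n₃),
        A (x, y, z) = ∑ i : Fin r₀, ∑ j : Fin r₁, σ i j * u i x * b i j y * c i j z) := by
  obtain ⟨σ₀, u, v, hσ₀, hu1, hu2, hv1, hv2, hdec1⟩ :=
    svd_exists_min n₁ (n₂ * n₃) r₀ hr₀ (fun x p => A (x, finProdFinEquiv.symm p))
  choose σ b c h0 h1 h2 h3 h4 h5 using fun i : Fin r₀ =>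
    svd_exists_min n₂ n₃ r₁ hr₁ (fun y z => σ₀ i * v i (finProdFinEquiv (y, z)))
  refine ⟨σ, u, b, c, h0, hu1, hu2, h1, h2, h3, h4, ?_⟩
  intro x y z
  have hA : A (x, y, z) = A (x, finProdFinEquiv.symm (finProdFinEquiv (y, z))) := by simp
  rw [hA, hdec1]
  refine Finset.sum_congr rfl fun i _ => ?_
  calc σ₀ i * u i x * v i (finProdFinEquiv (y, z))
      = u i x * (σ₀ i * v i (finProdFinEquiv (y, z))) := by ring
    _ = u i x * ∑ j, σ i j * b i j y * c i j z := by rw [h5 i y z]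
    _ = ∑ j, σ i j * u i x * b i j y * c i j z := by
        rw [Finset.mul_sum]; exact Finset.sum_congr rfl fun j _ => by ring
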